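/- Let K be an algebraically closed field, g ≥ 1 an integer, and Q an invertible symmetric g×g matrix over K; if char K = 2, assume in addition that at least one diagonal entry of Q is nonzero. Then for every ν ∈ K with ν^g = det(Q) there exists Λ ∈ SL_g(K) such that Λ·Q·Λᵗ = ν·1_g. -/

import Mathlib

open Matrix Module LinearMap LinearMap.BilinForm

section Aux

variable {K : Type*} [Field K] [IsAlgClosed K]
variable {V : Type*} [AddCommGroup V] [Module K V] [FiniteDimensional K V]

set_option linter.unusedSectionVars false
set_option linter.unusedVariables false

-- char 2 linear "square root of the quadratic form"
lemma char2_sq (h2 : (2:K) = 0) (B : LinearMap.BilinForm K V) (hsymm : B.IsSymm) :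
    ∃ ℓ : V →ₗ[K] K, ∀ x, (ℓ x) ^ 2 = B x x := by
  have hchar : ringChar K = 2 := CharP.ringChar_of_prime_eq_zero Nat.prime_two h2
  haveI : CharP K 2 := hchar ▸ ringChar.charP K
  haveI : PerfectRing K 2 := PerfectRing.ofSurjective K 2 fun x =>
    IsAlgClosed.exists_pow_nat_eq x two_pos
  let φ := frobeniusEquiv K 2
  have hφ : ∀ x : K, φ x = x ^ 2 := fun x => rfl
  have key : ∀ x, (φ.symm (B x x)) ^ 2 = B x x := fun x => by
    rw [← hφ, φ.apply_symm_apply]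
  refine ⟨{ toFun := fun x => φ.symm (B x x)
            map_add' := ?_
            map_smul' := ?_ }, fun x => key x⟩
  · intro x y
    apply φ.injective
    rw [φ.apply_symm_apply, hφ, add_sq, key, key]
    have hxy : B x y = B y x := by
      have := (LinearMap.BilinForm.isSymm_iff.1 hsymm).eq x y; simpa using this
    have expand : B (x + y) (x + y) = B x x + B x y + B y x + B y y := by
      simp [map_add, LinearMap.add_apply]; ring
    rw [expand, ← hxy]
    ring_nf
    rw [h2]
    ring
  · intro c x
    apply φ.injective
    rw [φ.apply_symm_apply]
    simp only [RingHom.id_apply, smul_eq_mul, hφ]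
    rw [mul_pow, key]
    simp only [LinearMap.map_smul, LinearMap.smul_apply, smul_eq_mul]
    ring

lemma claimC (B : LinearMap.BilinForm K V) (hsymm : B.IsSymm) (hnd : B.Nondegenerate)
    (hℓ : ∃ ℓ : V →ₗ[K] K, ∀ x, (ℓ x) ^ 2 = B x x)
    (hdim : 2 ≤ finrank K V) (hx : ∃ x, B x x ≠ 0) :
    ∃ v, B v v ≠ 0 ∧ ∃ w, B v w = 0 ∧ B w w ≠ 0 := by
  obtain ⟨ℓ, hℓ⟩ := hℓ
  have hℓne : ℓ ≠ 0 := by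
    obtain ⟨x, hx⟩ := hx
    intro h
    apply hx
    rw [← hℓ, h]
    simp
  -- v₀ : the vector representing ℓ via B
  set v₀ : V := (B.toDual hnd).symm ℓ with hv₀
  have hBv₀ : B v₀ = ℓ := by
    rw [hv₀]
    ext y
    exact LinearMap.BilinForm.apply_toDual_symm_apply (hB := hnd) ℓ y
  -- choose v with ℓ v ≠ 0 and v ∉ span {v₀}
  have hv₀ne : v₀ ≠ 0 := by
    intro h
    apply hℓne
    rw [← hBv₀, h, map_zero]
  have hspan : (K ∙ v₀) ≠ ⊤ := by
    intro h
    have h1 : finrank K (K ∙ v₀) = 1 := finrank_span_singleton hv₀ne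
    rw [h, finrank_top] at h1
    omega
  obtain ⟨v, hv⟩ : ∃ v, ℓ v ≠ 0 ∧ v ∉ (K ∙ v₀) := by
    by_cases h0 : ℓ v₀ = 0
    · obtain ⟨v, hv⟩ : ∃ v, ℓ v ≠ 0 := by
        by_contra h
        push_neg at h
        exact hℓne (LinearMap.ext fun x => h x)
      refine ⟨v, hv, fun hmem => ?_⟩
      obtain ⟨c, rfl⟩ := Submodule.mem_span_singleton.1 hmem
      rw [LinearMap.map_smul, smul_eq_mul, h0, mul_zero] at hv
      exact hv rfl
    · obtain ⟨w, hw⟩ : ∃ w, w ∉ (K ∙ v₀) := by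
        by_contra h
        push_neg at h
        exact hspan (Submodule.eq_top_iff'.2 h)
      by_cases hlw : ℓ w = 0
      · refine ⟨w + v₀, ?_, fun hmem => hw ?_⟩
        · rw [map_add, hlw, zero_add]; exact h0
        · have : w + v₀ - v₀ ∈ (K ∙ v₀) :=
            Submodule.sub_mem _ hmem (Submodule.mem_span_singleton_self v₀)
          simpa using this
      · exact ⟨w, hlw, hw⟩
  refine ⟨v, ?_, ?_⟩
  · rw [← hℓ]
    exact pow_ne_zero 2 hv.1
  -- now find w orthogonal to v with ℓ w ≠ 0
  by_contra h
  push_neg at h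
  have hker : LinearMap.ker (B v) ≤ LinearMap.ker ℓ := by
    intro w hw
    rw [LinearMap.mem_ker] at hw ⊢
    by_contra hlw
    exact hlw (by
      have := h w hw
      have h2 : (ℓ w) ^ 2 = 0 := by rw [hℓ]; exact this
      exact pow_eq_zero_iff (n := 2) (by norm_num) |>.1 h2)
  -- hence ℓ ∈ span {B v}
  have : ℓ ∈ Submodule.span K (Set.range (fun _ : Fin 1 => B v)) := by
    apply mem_span_of_iInf_ker_le_ker
    simpa using hker
  rw [Set.range_const, Submodule.mem_span_singleton] at this
  obtain ⟨c, hc⟩ := this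
  -- transfer to v₀ = c • v
  have hcv : B v₀ = B (c • v) := by rw [hBv₀, ← hc, LinearMap.map_smul]
  have hv₀v : v₀ = c • v := (B.toDual hnd).injective (by
    ext y; exact DFunLike.congr_fun hcv y)
  have hc0 : c ≠ 0 := by
    rintro rfl
    rw [zero_smul] at hv₀v
    rw [hv₀v] at hBv₀
    rw [map_zero] at hBv₀
    exact hℓne hBv₀.symm
  apply hv.2
  rw [Submodule.mem_span_singleton]
  exact ⟨c⁻¹, by rw [hv₀v, smul_smul, inv_mul_cancel₀ hc0, one_smul]⟩

lemma claimC2 (h2 : (2:K) ≠ 0) (B : LinearMap.BilinForm K V) (hsymm : B.IsSymm)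
    (hnd : B.Nondegenerate) (hdim : 2 ≤ finrank K V) :
    ∃ v, B v v ≠ 0 ∧ ∃ w, B v w = 0 ∧ B w w ≠ 0 := by
  haveI : Invertible (2:K) := invertibleOfNonzero h2
  haveI : Nontrivial V := by
    rw [← finrank_pos_iff (R := K)]; omega
  have hBne : B ≠ 0 := by
    intro h
    obtain ⟨x, hx⟩ := exists_ne (0 : V)
    exact hx (hnd.1 x (fun y => by rw [h]; rfl))
  obtain ⟨v, hv⟩ := LinearMap.BilinForm.exists_bilinForm_self_ne_zero hBne (LinearMap.BilinForm.isSymm_iff.1 hsymm)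
  have hiso : ¬ B.IsOrtho v v := hv
  refine ⟨v, hv, ?_⟩
  by_contra h
  push_neg at h
  -- the orthogonal complement of v is nontrivial
  have hvne : v ≠ 0 := fun h0 => hv (by rw [h0]; simp)
  have hcompl := LinearMap.BilinForm.isCompl_span_singleton_orthogonal hiso
  have hrank := Submodule.finrank_add_eq_of_isCompl hcompl
  rw [finrank_span_singleton hvne] at hrank
  have hWpos : 0 < finrank K (B.orthogonal (K ∙ v)) := by omega
  obtain ⟨w, hwmem, hwne⟩ : ∃ w, w ∈ B.orthogonal (K ∙ v) ∧ w ≠ 0 := by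
    rw [finrank_pos_iff] at hWpos
    obtain ⟨⟨w, hw⟩, hne⟩ := exists_ne (0 : B.orthogonal (K ∙ v))
    exact ⟨w, hw, fun h0 => hne (Subtype.ext h0)⟩
  -- B v w = 0
  have hvw : B v w = 0 := hwmem v (Submodule.mem_span_singleton_self v)
  -- show B w = 0, contradicting nondegeneracy
  apply hwne
  apply hnd.1
  intro y
  -- decompose y
  have hy : y ∈ (K ∙ v) ⊔ B.orthogonal (K ∙ v) := by
    rw [hcompl.sup_eq_top]; trivial
  obtain ⟨y₁, hy₁, z, hz, rfl⟩ := Submodule.mem_sup.1 hy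
  obtain ⟨a, rfl⟩ := Submodule.mem_span_singleton.1 hy₁
  have hvz : B v z = 0 := hz v (Submodule.mem_span_singleton_self v)
  -- B w z = 0 using polarization
  have hww : B w w = 0 := h w hvw
  have hzz : B z z = 0 := h z hvz
  have hwz2 : B (w + z) (w + z) = 0 := by
    apply h
    rw [map_add, hvw, hvz, add_zero]
  have hsym' : B z w = B w z := by have := (LinearMap.BilinForm.isSymm_iff.1 hsymm).eq z w; simpa using this
  have hexp : B (w + z) (w + z) = B w w + B w z + B z w + B z z := by
    simp [map_add, LinearMap.add_apply]; ring
  rw [hexp, hww, hzz, hsym'] at hwz2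
  have hwz : B w z = 0 := by
    have : 2 * B w z = 0 := by linear_combination hwz2
    exact (mul_eq_zero.1 this).resolve_left h2
  have hwv : B w v = 0 := by have := (LinearMap.BilinForm.isSymm_iff.1 hsymm).eq v w; simp at this; rw [← this, hvw]
  rw [map_add, LinearMap.map_smul]
  simp [hwv, hwz]

lemma claimC' (B : LinearMap.BilinForm K V) (hsymm : B.IsSymm) (hnd : B.Nondegenerate)
    (hdim : 2 ≤ finrank K V) (hx : ∃ x, B x x ≠ 0) :
    ∃ v, B v v ≠ 0 ∧ ∃ w, B v w = 0 ∧ B w w ≠ 0 := by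
  by_cases h2 : (2:K) = 0
  · exact claimC B hsymm hnd (char2_sq h2 B hsymm) hdim hx
  · exact claimC2 h2 B hsymm hnd hdim

end Aux

section Aux2

variable {K : Type*} [Field K] [IsAlgClosed K]

set_option linter.unusedSectionVars false
set_option linter.unusedVariables false

theorem exists_orthonormal (n : ℕ) :
    ∀ {V : Type u_2} [AddCommGroup V] [Module K V] [FiniteDimensional K V],
    finrank K V = n →
    ∀ B : LinearMap.BilinForm K V, B.IsSymm → B.Nondegenerate →
    (n ≠ 0 → ∃ x, B x x ≠ 0) →
    ∃ b : Basis (Fin n) K V, ∀ i j, B (b i) (b j) = if i = j then 1 else 0 := by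
  induction n with
  | zero =>
    intro V _ _ _ hd B _ _ _
    exact ⟨basisOfFinrankZero hd, fun i => i.elim0⟩
  | succ d ih =>
    intro V _ _ _ hd B hsymm hnd hani
    -- pick a good anisotropic vector
    obtain ⟨v, hv, hsub⟩ :
        ∃ v, B v v ≠ 0 ∧ (d ≠ 0 → ∃ w, B v w = 0 ∧ B w w ≠ 0) := by
      rcases Nat.eq_zero_or_pos d with rfl | hdpos
      · obtain ⟨v, hv⟩ := hani (by omega)
        exact ⟨v, hv, fun h => absurd rfl h⟩
      · obtain ⟨v, hv, w, hw⟩ := claimC' B hsymm hnd (by omega) (hani (by omega))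
        exact ⟨v, hv, fun _ => ⟨w, hw⟩⟩
    -- rescale v so that B v v = 1
    obtain ⟨c, hc⟩ := IsAlgClosed.exists_pow_nat_eq ((B v v)⁻¹) two_pos
    set x := c • v with hx
    have hBxx : B x x = 1 := by
      have h1 : B x x = c ^ 2 * B v v := by
        rw [hx]
        simp only [_root_.map_smul, LinearMap.smul_apply, smul_eq_mul]
        ring
      rw [h1, hc, inv_mul_cancel₀ hv]
    have hxne : ¬ LinearMap.BilinForm.IsOrtho B x x := by
      rw [LinearMap.BilinForm.isOrtho_def, hBxx]; exact one_ne_zero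
    have hc0 : c ≠ 0 := by
      intro h; rw [h, zero_smul] at hx; rw [hx] at hBxx; simp at hBxx
    have hxnz : x ≠ 0 := fun h => by rw [h] at hBxx; simp at hBxx
    -- the orthogonal complement
    set W := B.orthogonal (K ∙ x) with hW
    have hcompl := LinearMap.BilinForm.isCompl_span_singleton_orthogonal hxne
    have hrank := Submodule.finrank_add_eq_of_isCompl hcompl
    rw [finrank_span_singleton hxnz, hd] at hrank
    have hWrank : finrank K W = d := by rw [hW]; omega
    set B' := B.restrict W with hB'
    have hB'symm : B'.IsSymm := by
      refine ⟨fun a b => ?_⟩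
      exact hsymm.eq a b
    have hB'nd : B'.Nondegenerate :=
      LinearMap.BilinForm.restrict_nondegenerate_orthogonal_spanSingleton B hnd hsymm.isRefl hxne
    have hB'ani : d ≠ 0 → ∃ y : W, B' y y ≠ 0 := by
      intro hd0
      obtain ⟨w, hvw, hww⟩ := hsub hd0
      have hwW : w ∈ W := by
        intro y hy
        obtain ⟨a, rfl⟩ := Submodule.mem_span_singleton.1 hy
        rw [hx]
        simp only [_root_.map_smul, LinearMap.smul_apply, smul_eq_mul]
        rw [hvw]
        ring
      exact ⟨⟨w, hwW⟩, by simpa [hB'] using hww⟩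
    obtain ⟨b', hb'⟩ := ih hWrank B' hB'symm hB'nd hB'ani
    -- build the basis of V
    have hBx : B x x ≠ 0 := by rw [hBxx]; exact one_ne_zero
    let b :=
      Basis.mkFinCons x b'
        (by
          rintro c' y hy hc'
          rw [add_eq_zero_iff_neg_eq] at hc'
          rw [← hc', Submodule.neg_mem_iff] at hy
          have hdisj := hcompl.disjoint
          rw [Submodule.disjoint_def] at hdisj
          have := hdisj (c' • x) (Submodule.smul_mem _ _ <| Submodule.mem_span_singleton_self _) hy
          exact (smul_eq_zero.1 this).resolve_right hxnz)
        (by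
          intro y
          refine ⟨-(B x y), fun z hz => ?_⟩
          obtain ⟨a, rfl⟩ := Submodule.mem_span_singleton.1 hz
          simp only [_root_.map_smul, map_add, LinearMap.smul_apply, LinearMap.add_apply,
            smul_eq_mul]
          rw [hBxx]
          ring)
    refine ⟨b, ?_⟩
    have hcoe : ⇑b = Fin.cons x (W.subtype ∘ b') := Basis.coe_mkFinCons x b' _ _
    intro i j
    refine Fin.cases ?_ (fun i => ?_) i <;> refine Fin.cases ?_ (fun j => ?_) j <;>
      simp only [hcoe, Fin.cons_zero, Fin.cons_succ, Function.comp_apply]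
    · simp [hBxx]
    · rw [if_neg (Fin.succ_ne_zero j).symm]
      exact (b' j).prop x (Submodule.mem_span_singleton_self x)
    · rw [if_neg (Fin.succ_ne_zero i)]
      have h0 : B x ((b' i : V)) = 0 := (b' i).prop x (Submodule.mem_span_singleton_self x)
      have h1 := (LinearMap.BilinForm.isSymm_iff.1 hsymm).eq x ((b' i : V))
      simp only [RingHom.id_apply] at h1
      show B ((b' i : V)) x = 0
      rw [← h1, h0]
    · have h := hb' i j
      have h2 : (if i.succ = j.succ then (1:K) else 0) = if i = j then (1:K) else 0 := by
        simp [Fin.succ_inj]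
      rw [h2]
      exact h

lemma exists_congr_one (g : ℕ) (Q : Matrix (Fin g) (Fin g) K) (hsymm : Qᵀ = Q)
    (hQ : IsUnit Q.det) (h2 : ringChar K = 2 → ∃ i, Q i i ≠ 0) :
    ∃ P : Matrix (Fin g) (Fin g) K, P * Q * Pᵀ = 1 := by
  set B : LinearMap.BilinForm K (Fin g → K) := Matrix.toBilin' Q with hB
  have hBsymm : B.IsSymm := by
    refine ⟨fun a b => ?_⟩
    simp only [RingHom.id_apply, hB, Matrix.toBilin'_apply]
    rw [Finset.sum_comm]
    refine Finset.sum_congr rfl fun j _ => Finset.sum_congr rfl fun i _ => ?_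
    have hq : Q j i = Q i j := by
      have := congrFun (congrFun hsymm i) j
      rw [Matrix.transpose_apply] at this
      exact this
    rw [hq]; ring
  have hdet : Q.det ≠ 0 := hQ.ne_zero
  have hBnd : B.Nondegenerate := by
    rw [hB]
    exact LinearMap.BilinForm.nondegenerate_toBilin'_iff_det_ne_zero.mpr hdet
  have hani : g ≠ 0 → ∃ x, B x x ≠ 0 := by
    intro hg0
    by_cases hc2 : ringChar K = 2
    · obtain ⟨i, hi⟩ := h2 hc2
      refine ⟨Pi.single i 1, ?_⟩
      rw [hB, Matrix.toBilin'_single]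
      exact hi
    · have h20 : (2:K) ≠ 0 := fun h =>
        hc2 (CharP.ringChar_of_prime_eq_zero Nat.prime_two h)
      haveI : Invertible (2:K) := invertibleOfNonzero h20
      haveI : Nonempty (Fin g) := Fin.pos_iff_nonempty.1 (Nat.pos_of_ne_zero hg0)
      haveI : Nontrivial (Fin g → K) := inferInstance
      have hBne : B ≠ 0 := by
        intro h
        obtain ⟨x, hx⟩ := exists_ne (0 : Fin g → K)
        exact hx (hBnd.1 x (fun y => by rw [h]; rfl))
      obtain ⟨v, hv⟩ := LinearMap.BilinForm.exists_bilinForm_self_ne_zero hBne (LinearMap.BilinForm.isSymm_iff.1 hBsymm)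
      exact ⟨v, hv⟩
  have hfr : finrank K (Fin g → K) = g := by simp
  obtain ⟨b, hb⟩ := exists_orthonormal g hfr B hBsymm hBnd hani
  refine ⟨Matrix.of fun i j => b i j, ?_⟩
  ext i j
  rw [Matrix.one_apply, ← hb i j, hB, Matrix.toBilin'_apply]
  simp only [Matrix.mul_apply, Matrix.transpose_apply, Matrix.of_apply, Finset.sum_mul]
  rw [Finset.sum_comm]
end Aux2

/-- Let `K` be algebraically closed, `g ≥ 1`, and let `Q` be an invertible
symmetric `g × g` matrix over `K`; if `char K = 2`, assume moreover that some diagonal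
entry of `Q` is nonzero.  Then for every `ν ∈ K` with `ν^g = det Q` there exists
`Λ ∈ SL_g(K)` with `Λ · Q · Λᵗ = ν · 1_g`. -/
theorem stmt13 (K : Type*) [Field K] [IsAlgClosed K] (g : ℕ) (hg : 1 ≤ g)
    (Q : Matrix (Fin g) (Fin g) K) (hsymm : Qᵀ = Q) (hQ : IsUnit Q.det)
    (h2 : ringChar K = 2 → ∃ i, Q i i ≠ 0)
    (ν : K) (hν : ν ^ g = Q.det) :
    ∃ Λ : SpecialLinearGroup (Fin g) K,
      (Λ : Matrix (Fin g) (Fin g) K) * Q * (Λ : Matrix (Fin g) (Fin g) K)ᵀ =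
        ν • (1 : Matrix (Fin g) (Fin g) K) := by
  obtain ⟨P, hP⟩ := exists_congr_one g Q hsymm hQ h2
  -- det P ^ 2 * det Q = 1
  have hdet1 : P.det ^ 2 * Q.det = 1 := by
    have := congrArg Matrix.det hP
    rw [Matrix.det_mul, Matrix.det_mul, Matrix.det_transpose, Matrix.det_one] at this
    rw [← this]; ring
  -- a square root of ν
  obtain ⟨μ, hμ⟩ := IsAlgClosed.exists_pow_nat_eq ν two_pos
  set ε : K := μ ^ g * P.det with hε
  have hε2 : ε ^ 2 = 1 := by
    have h1 : ε ^ 2 = (μ ^ 2) ^ g * P.det ^ 2 := by rw [hε]; ring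
    rw [h1, hμ, hν]
    rw [mul_comm]
    exact hdet1
  have hε0 : ε ≠ 0 := by
    intro h
    rw [h] at hε2
    simp at hε2
  -- the scaling diagonal
  set i0 : Fin g := ⟨0, hg⟩ with hi0
  set d : Fin g → K := fun i => if i = i0 then ε⁻¹ * μ else μ with hd
  have hdsq : ∀ i, d i * d i = ν := by
    intro i
    rw [hd]
    simp only []
    beta_reduce
    by_cases h : i = i0
    · rw [if_pos h]
      have h3 : ε⁻¹ * μ * (ε⁻¹ * μ) = (ε ^ 2)⁻¹ * μ ^ 2 := by
        rw [pow_two, pow_two, mul_inv]; ring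
      rw [h3, hε2, inv_one, one_mul, hμ]
    · rw [if_neg h, ← pow_two, hμ]
  have hprod : ∏ i, d i = ε⁻¹ * μ ^ g := by
    rw [← Finset.mul_prod_erase Finset.univ d (Finset.mem_univ i0)]
    have h1 : ∀ x ∈ Finset.univ.erase i0, d x = μ := by
      intro x hx
      rw [hd]
      exact if_neg (Finset.mem_erase.1 hx).1
    rw [Finset.prod_congr rfl h1, Finset.prod_const,
      Finset.card_erase_of_mem (Finset.mem_univ i0), Finset.card_univ, Fintype.card_fin]
    have hd0 : d i0 = ε⁻¹ * μ := by rw [hd]; simp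
    rw [hd0]
    have : μ * μ ^ (g - 1) = μ ^ g := by
      rw [← pow_succ']
      congr 1
      omega
    rw [mul_assoc, this]
  set Λmat : Matrix (Fin g) (Fin g) K := Matrix.diagonal d * P with hΛ
  have hΛdet : Λmat.det = 1 := by
    rw [hΛ, Matrix.det_mul, Matrix.det_diagonal, hprod]
    rw [mul_assoc, ← hε]
    exact inv_mul_cancel₀ hε0
  refine ⟨⟨Λmat, hΛdet⟩, ?_⟩
  show Λmat * Q * Λmatᵀ = ν • 1
  rw [hΛ, Matrix.transpose_mul, Matrix.diagonal_transpose]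
  have hassoc : Matrix.diagonal d * P * Q * (Pᵀ * Matrix.diagonal d)
      = Matrix.diagonal d * (P * Q * Pᵀ) * Matrix.diagonal d := by
    simp only [Matrix.mul_assoc]
  rw [hassoc, hP, Matrix.mul_one, Matrix.diagonal_mul_diagonal]
  ext i j
  by_cases h : i = j
  · subst h
    simp [Matrix.diagonal_apply_eq, hdsq i, Matrix.one_apply]
  · simp [Matrix.diagonal_apply_ne _ h, Matrix.one_apply, h]
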